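/- arXiv:1310.3796 — 7 statements merged into one kernel-verified Lean document; each statement's English description precedes it below -/
import Mathlib

section
/- Every subcode of a convex combinatorial code is convex. That is, if C ⊆ 2^[n] is a convex code and σ ⊆ [n], then the restricted code C(σ) = {σ ∩ μ : μ ∈ C} ⊆ 2^σ is a convex code. -/
/-- A combinatorial code `C ⊆ 2^[n]` is convex if there are a convex set `X ⊆ ℝ^d`
and convex subsets `V i ⊆ X` such that `C` consists exactly of the subsets `σ`
whose atom `(⋂_{i∈σ} V i) ∩ ⋂_{j∉σ} (X \ V j)` is nonempty (empty intersections
being `X` by convention). -/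
def IsConvexCode {n : ℕ} (C : Set (Finset (Fin n))) : Prop :=
  ∃ (d : ℕ) (X : Set (Fin d → ℝ)) (V : Fin n → Set (Fin d → ℝ)),
    Convex ℝ X ∧ (∀ i, Convex ℝ (V i) ∧ V i ⊆ X) ∧
    ∀ σ : Finset (Fin n),
      σ ∈ C ↔ ((X ∩ ⋂ i ∈ σ, V i) ∩ ⋂ j ∈ σᶜ, (X \ V j)).Nonempty

/-- Every subcode (restriction) of a convex code is convex. -/
theorem subcode_of_convex_isConvex {n : ℕ} (C : Set (Finset (Fin n)))
    (hC : IsConvexCode C) (σ : Finset (Fin n)) :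
    IsConvexCode {ν | ∃ μ ∈ C, ν = σ ∩ μ} := by
  classical
  obtain ⟨d, X, V, hX, hV, hatom⟩ := hC
  refine ⟨d, X, fun i => if i ∈ σ then V i else ∅, hX, ?_, ?_⟩
  · intro i
    by_cases h : i ∈ σ
    · simpa [h] using hV i
    · simp [h, convex_empty]
  · intro ν
    constructor
    · rintro ⟨μ, hμ, rfl⟩
      obtain ⟨x, ⟨hxX, hxV⟩, hxC⟩ := (hatom μ).mp hμ
      refine ⟨x, ⟨hxX, ?_⟩, ?_⟩
      · simp only [Set.mem_iInter]
        intro i hi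
        have hiσ : i ∈ σ := (Finset.mem_inter.mp hi).1
        have hiμ : i ∈ μ := (Finset.mem_inter.mp hi).2
        simp only [hiσ, if_true]
        exact Set.mem_iInter₂.mp hxV i hiμ
      · simp only [Set.mem_iInter]
        intro j hj
        by_cases hjσ : j ∈ σ
        · have hjμ : j ∉ μ := fun h =>
            absurd (Finset.mem_inter.mpr ⟨hjσ, h⟩) (Finset.mem_compl.mp hj)
          simpa only [hjσ, if_true] using
            Set.mem_iInter₂.mp hxC j (Finset.mem_compl.mpr hjμ)
        · simp [hjσ, hxX]
    · rintro ⟨x, ⟨⟨hxX, hxV⟩, hxC⟩⟩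
      refine ⟨Finset.univ.filter (fun i => x ∈ V i), ?_, ?_⟩
      · apply (hatom _).mpr
        refine ⟨x, ⟨hxX, ?_⟩, ?_⟩
        · simp only [Set.mem_iInter]
          intro i hi
          exact (Finset.mem_filter.mp hi).2
        · simp only [Set.mem_iInter]
          intro j hj
          exact ⟨hxX, fun h =>
            (Finset.mem_compl.mp hj) (Finset.mem_filter.mpr ⟨Finset.mem_univ _, h⟩)⟩
      · ext i
        simp only [Finset.mem_inter, Finset.mem_filter, Finset.mem_univ, true_and]
        constructor
        · intro hi
          have h := Set.mem_iInter₂.mp hxV i hi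
          by_cases hiσ : i ∈ σ
          · exact ⟨hiσ, by simpa [hiσ] using h⟩
          · simp [hiσ] at h
        · rintro ⟨hiσ, hxi⟩
          by_contra hiν
          have h := Set.mem_iInter₂.mp hxC i (Finset.mem_compl.mpr hiν)
          simp only [if_pos hiσ] at h
          exact h.2 hxi
end

section
/- Let Δ ⊆ 2^[m] be an abstract simplicial complex with maximal faces α_1,...,α_n. Define U ∈ ℝ^{n×m} by U_{ia} = 1 if a ∈ α_i and U_{ia} = −n if a ∉ α_i, and set θ_i = 1/2 for all i. Then for every nonempty σ ⊆ [n]: the intersection ⋂_{i∈σ} H_i^+ is nonempty if and only if ⋂_{i∈σ} α_i ≠ ∅, where H_i^+ = {y ∈ ℝ^m_{≥0} : Σ_a U_{ia} y_a > 1/2}. Consequently Δ(C(U,θ)) equals the nerve N(Δ). -/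
/-- The combinatorial code of a one-layer feedforward network `(U, θ)`. -/
def ffCode {n m : ℕ} (U : Fin n → Fin m → ℝ) (θ : Fin n → ℝ) : Set (Finset (Fin n)) :=
  {σ | ∃ y : Fin m → ℝ, (∀ a, 0 ≤ y a) ∧ ∀ i, i ∈ σ ↔ θ i < ∑ a, U i a * y a}

/-- The abstract simplicial complex generated by a code. -/
def codeComplex {n : ℕ} (C : Set (Finset (Fin n))) : Set (Finset (Fin n)) :=
  {ν | ∃ σ ∈ C, ν ⊆ σ}

/-- The nerve of the collection of maximal faces `α_1, …, α_n`: a subset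
`σ ⊆ [n]` is a face iff it is empty or `⋂_{i∈σ} α_i ≠ ∅`. -/
def nerveOf {n m : ℕ} (α : Fin n → Finset (Fin m)) : Set (Finset (Fin n)) :=
  {σ | σ = ∅ ∨ ∃ a : Fin m, ∀ i ∈ σ, a ∈ α i}

/-- Grünbaum-type construction: let `Δ ⊆ 2^[m]` be a simplicial complex whose
maximal faces are `α_1, …, α_n`, and let `U_{ia} = 1` if `a ∈ α_i`, `U_{ia} = -n`
otherwise, with all thresholds `θ_i = 1/2`.  Then for every nonempty `σ ⊆ [n]`,
`⋂_{i∈σ} H_i^+ ≠ ∅` iff `⋂_{i∈σ} α_i ≠ ∅`; consequently the simplicial complex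
of the code `C(U,θ)` is the nerve `N(Δ)`. -/
theorem construction_realizes_nerve {n m : ℕ}
    (Δ : Set (Finset (Fin m))) (hdown : ∀ σ ∈ Δ, ∀ τ ⊆ σ, τ ∈ Δ)
    (α : Fin n → Finset (Fin m))
    (hmax : ∀ i, α i ∈ Δ ∧ ∀ τ ∈ Δ, α i ⊆ τ → τ = α i)
    (hcover : ∀ τ ∈ Δ, ∃ i, τ ⊆ α i)
    (hne : ∀ i, (α i).Nonempty)
    (U : Fin n → Fin m → ℝ)
    (hU : ∀ i a, U i a = if a ∈ α i then 1 else -(n : ℝ))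
    (θ : Fin n → ℝ) (hθ : ∀ i, θ i = 1 / 2) :
    (∀ σ : Finset (Fin n), σ.Nonempty →
      ((⋂ i ∈ σ, {y : Fin m → ℝ | (∀ a, 0 ≤ y a) ∧ θ i < ∑ a, U i a * y a}).Nonempty
        ↔ ∃ a : Fin m, ∀ i ∈ σ, a ∈ α i)) ∧
    codeComplex (ffCode U θ) = nerveOf α := by
  -- key combinatorial lemma
  have key : ∀ σ : Finset (Fin n), σ.Nonempty →
      ∀ y : Fin m → ℝ, (∀ a, 0 ≤ y a) → (∀ i ∈ σ, (1:ℝ)/2 < ∑ a, U i a * y a) →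
        ∃ a : Fin m, ∀ i ∈ σ, a ∈ α i := by
    intro σ hσ y hy hlt
    by_contra hcon
    push_neg at hcon
    obtain ⟨i0, hi0⟩ := hσ
    have hn1 : (1:ℝ) ≤ n := by exact_mod_cast i0.pos
    set A : Fin n → ℝ := fun i => ∑ a, if a ∈ α i then y a else 0 with hAdef
    set B : Fin n → ℝ := fun i => ∑ a, if a ∈ α i then 0 else y a with hBdef
    set T : ℝ := ∑ a, y a with hTdef
    have hAB : ∀ i, A i + B i = T := by
      intro i
      rw [hAdef, hBdef, hTdef, ← Finset.sum_add_distrib]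
      apply Finset.sum_congr rfl
      intro a _
      by_cases hA : a ∈ α i <;> simp [hA]
    have hBnn : ∀ i, 0 ≤ B i := by
      intro i
      apply Finset.sum_nonneg
      intro a _
      by_cases hA : a ∈ α i <;> simp [hA, hy a]
    have hsum : ∀ i, ∑ a, U i a * y a = A i - (n:ℝ) * B i := by
      intro i
      have h1 : ∀ a : Fin m, U i a * y a =
          (if a ∈ α i then y a else 0) - (n:ℝ) * (if a ∈ α i then 0 else y a) := by
        intro a
        rw [hU]
        by_cases hA : a ∈ α i <;> simp [hA]
      simp_rw [h1]
      rw [Finset.sum_sub_distrib, ← Finset.mul_sum]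
    have hkey : ∀ i ∈ σ, (1:ℝ)/2 < A i - (n:ℝ) * B i := by
      intro i hi
      have := hlt i hi
      rwa [hsum] at this
    have hAleT : ∀ i, A i ≤ T := by
      intro i
      have := hAB i
      nlinarith [hBnn i]
    have hTpos : (1:ℝ)/2 < T := by
      have h1 := hkey i0 hi0
      have h2 := hBnn i0
      have h3 := hAleT i0
      nlinarith
    -- each i ∈ σ : n * B i < T - 1/2
    have hBi : ∀ i ∈ σ, (n:ℝ) * B i < T - 1/2 := by
      intro i hi
      have h1 := hkey i hi
      have h3 := hAleT i
      linarith
    -- T ≤ ∑ i in σ, B i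
    have hTB : T ≤ ∑ i ∈ σ, B i := by
      have hswap : ∑ i ∈ σ, B i = ∑ a, ∑ i ∈ σ, (if a ∈ α i then 0 else y a) := by
        rw [hBdef]
        exact Finset.sum_comm
      rw [hswap, hTdef]
      apply Finset.sum_le_sum
      intro a _
      obtain ⟨i, hiσ, hia⟩ := hcon a
      have hle := Finset.single_le_sum (f := fun j => if a ∈ α j then 0 else y a)
        (fun j _ => by by_cases hA : a ∈ α j <;> simp [hA, hy a]) hiσ
      simpa [hia] using hle
    -- derive contradiction
    have hstrict : ∑ i ∈ σ, (n:ℝ) * B i < ∑ i ∈ σ, (T - 1/2) :=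
      Finset.sum_lt_sum_of_nonempty ⟨i0, hi0⟩ hBi
    rw [Finset.sum_const, ← Finset.mul_sum, nsmul_eq_mul] at hstrict
    have hcard : (σ.card : ℝ) ≤ n := by
      exact_mod_cast (le_trans (Finset.card_le_univ σ) (by simp))
    have hThalf : (0:ℝ) < T - 1/2 := by linarith
    have h0n : (0:ℝ) ≤ n := by linarith
    have h1 : (n:ℝ) * T ≤ (n:ℝ) * ∑ i ∈ σ, B i := mul_le_mul_of_nonneg_left hTB h0n
    have h2 : (σ.card : ℝ) * (T - 1/2) ≤ (n:ℝ) * (T - 1/2) :=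
      mul_le_mul_of_nonneg_right hcard hThalf.le
    nlinarith
  -- sum against an indicator
  have hind : ∀ (i : Fin n) (a : Fin m),
      ∑ a', U i a' * (if a' = a then (1:ℝ) else 0) = U i a := by
    intro i a
    simp [mul_ite, mul_one, mul_zero, Finset.sum_ite_eq']
  constructor
  · intro σ hσ
    constructor
    · rintro ⟨y, hy⟩
      simp only [Set.mem_iInter, Set.mem_setOf_eq] at hy
      obtain ⟨i0, hi0⟩ := hσ
      refine key σ ⟨i0, hi0⟩ y (hy i0 hi0).1 ?_
      intro i hi
      have := (hy i hi).2
      rwa [hθ] at this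
    · rintro ⟨a, ha⟩
      refine ⟨fun a' => if a' = a then 1 else 0, ?_⟩
      simp only [Set.mem_iInter, Set.mem_setOf_eq]
      intro i hi
      constructor
      · intro a'; by_cases h : a' = a <;> simp [h]
      · rw [hθ, hind i a, hU, if_pos (ha i hi)]
        norm_num
  · ext ν
    simp only [codeComplex, ffCode, nerveOf, Set.mem_setOf_eq]
    constructor
    · rintro ⟨σ, ⟨y, hy0, hy⟩, hsub⟩
      rcases Finset.eq_empty_or_nonempty ν with hν | hν
      · exact Or.inl hν
      · right
        have hσne : σ.Nonempty := by
          obtain ⟨i, hi⟩ := hν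
          exact ⟨i, hsub hi⟩
        obtain ⟨a, ha⟩ := key σ hσne y hy0 (fun i hi => by
          have := (hy i).mp hi; rwa [hθ] at this)
        exact ⟨a, fun i hi => ha i (hsub hi)⟩
    · rintro (rfl | ⟨a, ha⟩)
      · refine ⟨∅, ⟨fun _ => 0, fun _ => le_refl 0, ?_⟩, Finset.Subset.refl _⟩
        intro i
        rw [hθ]
        simp
      · refine ⟨Finset.univ.filter (fun i => a ∈ α i),
          ⟨fun a' => if a' = a then 1 else 0, ?_, ?_⟩, ?_⟩
        · intro a'; by_cases h : a' = a <;> simp [h]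
        · intro i
          rw [hθ, hind i a, hU]
          by_cases hA : a ∈ α i
          · simp only [hA, if_true, Finset.mem_filter, Finset.mem_univ, true_and]
            norm_num
          · simp only [hA, if_false, Finset.mem_filter, Finset.mem_univ, true_and,
              false_iff, not_lt]
            have : (0:ℝ) ≤ n := Nat.cast_nonneg n
            linarith
        · intro i hi
          simp [ha i hi]
end

section
/- (Backward direction of the construction.) Let α_1,...,α_n ⊆ [m] and define H_i^+ = {y ∈ ℝ^m_{≥0} : Σ_{a∈α_i} y_a − n·Σ_{a∉α_i} y_a > 1/2}. If τ ⊆ [n] satisfies ⋂_{i∈τ} α_i = ∅, then ⋂_{i∈τ} H_i^+ = ∅. -/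
/-- Backward direction of the construction: if `⋂_{i∈τ} α_i = ∅` then
`⋂_{i∈τ} H_i^+ = ∅`, where
`H_i^+ = {y ∈ ℝ^m_{≥0} : ∑_{a∈α_i} y_a - n ∑_{a∉α_i} y_a > 1/2}`. -/
theorem Hplus_inter_empty {n m : ℕ} (hm : 0 < m) (α : Fin n → Finset (Fin m))
    (τ : Finset (Fin n))
    (hcap : ∀ a : Fin m, ∃ i ∈ τ, a ∉ α i) :
    (⋂ i ∈ τ, {y : Fin m → ℝ |
        (∀ a, 0 ≤ y a) ∧
        (1 : ℝ) / 2 < (∑ a ∈ α i, y a) - (n : ℝ) * ∑ a ∈ (α i)ᶜ, y a}) = ∅ := by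
  ext y
  simp only [Set.mem_iInter, Set.mem_setOf_eq, Set.mem_empty_iff_false, iff_false]
  intro h
  obtain ⟨i0, hi0, _⟩ := hcap ⟨0, hm⟩
  have hy0 : ∀ a, 0 ≤ y a := (h i0 hi0).1
  set S : ℝ := ∑ a, y a with hS
  have hS0 : 0 ≤ S := Finset.sum_nonneg fun a _ => hy0 a
  have hne : τ.Nonempty := ⟨i0, hi0⟩
  -- sum of the inequalities
  have hsum : (τ.card : ℝ) * (1 / 2) <
      ∑ i ∈ τ, ((∑ a ∈ α i, y a) - (n : ℝ) * ∑ a ∈ (α i)ᶜ, y a) := by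
    have := Finset.sum_lt_sum_of_nonempty hne (f := fun _ => (1:ℝ)/2)
      (g := fun i => (∑ a ∈ α i, y a) - (n : ℝ) * ∑ a ∈ (α i)ᶜ, y a)
      (fun i hi => (h i hi).2)
    simpa [mul_comm] using this
  -- each term equals S - (n+1) * T_i
  have hterm : ∀ i ∈ τ, ((∑ a ∈ α i, y a) - (n : ℝ) * ∑ a ∈ (α i)ᶜ, y a)
      = S - ((n : ℝ) + 1) * ∑ a ∈ (α i)ᶜ, y a := by
    intro i _
    have h1 : (∑ a ∈ α i, y a) + ∑ a ∈ (α i)ᶜ, y a = S :=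
      Finset.sum_add_sum_compl (α i) y
    linarith [h1]
  have hkey : S ≤ ∑ i ∈ τ, ∑ a ∈ (α i)ᶜ, y a := by
    have hrw : ∀ i : Fin n, ∑ a ∈ (α i)ᶜ, y a
        = ∑ a : Fin m, if a ∈ (α i)ᶜ then y a else 0 := by
      intro i
      rw [Finset.sum_ite_mem]
      simp
    calc S = ∑ a : Fin m, y a := rfl
      _ ≤ ∑ a : Fin m, ∑ i ∈ τ, if a ∈ (α i)ᶜ then y a else 0 := by
          apply Finset.sum_le_sum
          intro a _
          obtain ⟨i, hi, hai⟩ := hcap a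
          have := Finset.single_le_sum (f := fun i => if a ∈ (α i)ᶜ then y a else 0)
            (fun j _ => by split <;> simp [hy0 a]) hi
          simpa [hai] using this
      _ = ∑ i ∈ τ, ∑ a ∈ (α i)ᶜ, y a := by
          rw [Finset.sum_comm]
          exact Finset.sum_congr rfl fun i _ => (hrw i).symm
  have hcard : (τ.card : ℝ) ≤ n := by
    exact_mod_cast (τ.card_le_univ).trans_eq (by simp)
  have hsum2 : ∑ i ∈ τ, ((∑ a ∈ α i, y a) - (n : ℝ) * ∑ a ∈ (α i)ᶜ, y a)
      = τ.card * S - ((n : ℝ) + 1) * ∑ i ∈ τ, ∑ a ∈ (α i)ᶜ, y a := by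
    rw [Finset.sum_congr rfl hterm, Finset.sum_sub_distrib, Finset.sum_const,
      Finset.mul_sum]
    simp [hS, Finset.mul_sum, nsmul_eq_mul]
  have hpos : (0:ℝ) < τ.card := by exact_mod_cast hne.card_pos
  nlinarith [hsum, hsum2, hkey, hS0, hcard]
end

section
/- (No-go theorem.) For every antichain M ⊆ 2^[n] of nonempty subsets of [n], there exist m ∈ ℕ, a matrix U ∈ ℝ^{n×m}, and thresholds θ ∈ ℝ^n_{>0} such that the maximal codewords of the one-layer feedforward code C(U,θ) are exactly M: max(C(U,θ)) = M. -/
/-- The maximal codewords of a code. -/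
def maxCode {n : ℕ} (C : Set (Finset (Fin n))) : Set (Finset (Fin n)) :=
  {σ ∈ C | ∀ σ' ∈ C, σ ⊆ σ' → σ' = σ}

/-- Any member of `M` is a codeword of the constructed network. -/
lemma mem_ffCode_of_mem {n m : ℕ} (M : Set (Finset (Fin n))) (e : Fin m ≃ M)
    (τ : Finset (Fin n)) (hτ : τ ∈ M) :
    τ ∈ ffCode (fun i a => if i ∈ (e a : Finset (Fin n)) then (1 : ℝ) else -(n : ℝ))
      (fun _ => 1) := by
  refine ⟨fun a => if a = e.symm ⟨τ, hτ⟩ then 2 else 0, fun a => by positivity, fun i => ?_⟩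
  have hsum : ∑ a, (if i ∈ (e a : Finset (Fin n)) then (1 : ℝ) else -(n : ℝ)) *
      (if a = e.symm ⟨τ, hτ⟩ then 2 else 0)
      = (if i ∈ τ then (1 : ℝ) else -(n : ℝ)) * 2 := by
    rw [Finset.sum_eq_single (e.symm ⟨τ, hτ⟩)]
    · simp
    · intro b _ hb; simp [hb]
    · intro h; simp at h
  rw [hsum]
  by_cases h : i ∈ τ
  · simp [h]
  · simp [h]
    nlinarith [Nat.cast_nonneg (α := ℝ) n]

/-- Any nonempty codeword is contained in some member of `M`. -/
lemma subset_of_mem_ffCode {n m : ℕ} (M : Set (Finset (Fin n))) (e : Fin m ≃ M)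
    (σ : Finset (Fin n)) (hσne : σ.Nonempty)
    (hσ : σ ∈ ffCode (fun i a => if i ∈ (e a : Finset (Fin n)) then (1 : ℝ) else -(n : ℝ))
      (fun _ => 1)) :
    ∃ τ ∈ M, σ ⊆ τ := by
  by_contra hcon
  push_neg at hcon
  obtain ⟨y, hy0, hy⟩ := hσ
  set T : ℝ := ∑ a, y a with hT
  set B : Fin n → ℝ := fun i => ∑ a, if i ∈ (e a : Finset (Fin n)) then 0 else y a with hB
  have hB0 : ∀ i, 0 ≤ B i := by
    intro i
    apply Finset.sum_nonneg
    intro a _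
    split <;> [exact le_refl 0; exact hy0 a]
  -- For each i ∈ σ : 1 < T - (n+1) * B i
  have hkey : ∀ i ∈ σ, 1 < T - ((n : ℝ) + 1) * B i := by
    intro i hi
    have := (hy i).mp hi
    have hsplit : ∑ a, (if i ∈ (e a : Finset (Fin n)) then (1 : ℝ) else -(n : ℝ)) * y a
        = T - ((n : ℝ) + 1) * B i := by
      rw [hT, hB, Finset.mul_sum, ← Finset.sum_sub_distrib]
      apply Finset.sum_congr rfl
      intro a _
      by_cases h : i ∈ (e a : Finset (Fin n)) <;> simp [h] <;> try ring
    rw [hsplit] at this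
    exact this
  have hT1 : 1 < T := by
    obtain ⟨i, hi⟩ := hσne
    have := hkey i hi
    have h0 := hB0 i
    nlinarith [Nat.cast_nonneg (α := ℝ) n]
  -- sum of B over σ is at least T
  have hBsum : T ≤ ∑ i ∈ σ, B i := by
    have : ∑ i ∈ σ, B i = ∑ a, ∑ i ∈ σ, (if i ∈ (e a : Finset (Fin n)) then 0 else y a) := by
      rw [hB, Finset.sum_comm]
    rw [this, hT]
    apply Finset.sum_le_sum
    intro a _
    obtain ⟨j, hjσ, hjτ⟩ := Finset.not_subset.mp (hcon (e a) (e a).2)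
    calc y a = (if j ∈ (e a : Finset (Fin n)) then 0 else y a) := by simp [hjτ]
      _ ≤ ∑ i ∈ σ, (if i ∈ (e a : Finset (Fin n)) then 0 else y a) := by
          apply Finset.single_le_sum (f := fun i => if i ∈ (e a : Finset (Fin n)) then (0:ℝ) else y a)
          · intro i _
            split <;> [exact le_refl 0; exact hy0 a]
          · exact hjσ
  -- sum of (n+1) B over σ is strictly less than card σ * (T - 1)
  have hBlt : ((n : ℝ) + 1) * ∑ i ∈ σ, B i < (σ.card : ℝ) * (T - 1) := by
    rw [Finset.mul_sum]
    calc ∑ i ∈ σ, ((n : ℝ) + 1) * B i < ∑ _i ∈ σ, (T - 1) := by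
          apply Finset.sum_lt_sum_of_nonempty hσne
          intro i hi
          have := hkey i hi
          linarith
      _ = (σ.card : ℝ) * (T - 1) := by
          rw [Finset.sum_const, nsmul_eq_mul]
  have hcard : (σ.card : ℝ) ≤ (n : ℝ) := by
    exact_mod_cast Finset.card_le_card (Finset.subset_univ σ) |>.trans_eq (by simp)
  nlinarith [hB0, hBsum, hBlt, hT1, hcard]

/-- No-go theorem: every nonempty antichain `M` of nonempty subsets of `[n]` arises
as the set of maximal codewords of the code of some one-layer feedforward network
with positive thresholds. -/
theorem no_go {n : ℕ} (M : Set (Finset (Fin n))) (hM : M.Nonempty)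
    (hne : ∀ σ ∈ M, σ.Nonempty)
    (hanti : ∀ σ ∈ M, ∀ τ ∈ M, σ ⊆ τ → σ = τ) :
    ∃ (m : ℕ) (U : Fin n → Fin m → ℝ) (θ : Fin n → ℝ),
      (∀ i, 0 < θ i) ∧ maxCode (ffCode U θ) = M := by
  haveI : Fintype M := (Set.toFinite M).fintype
  set m := Fintype.card M with hm
  set e : Fin m ≃ M := (Fintype.equivFin M).symm with he
  refine ⟨m, fun i a => if i ∈ (e a : Finset (Fin n)) then (1 : ℝ) else -(n : ℝ),
    fun _ => 1, fun _ => one_pos, ?_⟩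
  ext σ
  constructor
  · rintro ⟨hσC, hmax⟩
    by_cases hσe : σ.Nonempty
    · obtain ⟨τ, hτM, hστ⟩ := subset_of_mem_ffCode M e σ hσe hσC
      have := hmax τ (mem_ffCode_of_mem M e τ hτM) hστ
      exact this ▸ hτM
    · exfalso
      obtain ⟨τ, hτM⟩ := hM
      rw [Finset.not_nonempty_iff_eq_empty] at hσe
      subst hσe
      have := hmax τ (mem_ffCode_of_mem M e τ hτM) (Finset.empty_subset τ)
      exact (hne τ hτM).ne_empty this
  · intro hσM
    refine ⟨mem_ffCode_of_mem M e σ hσM, ?_⟩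
    intro σ' hσ' hss
    have hσ'ne : σ'.Nonempty := (hne σ hσM).mono hss
    obtain ⟨τ, hτM, hσ'τ⟩ := subset_of_mem_ffCode M e σ' hσ'ne hσ'
    have : σ = τ := hanti σ hσM τ hτM (hss.trans hσ'τ)
    subst this
    exact Finset.Subset.antisymm hσ'τ hss
end

section
/- (Dale's law proposition.) Suppose U ∈ ℝ^{n×m} is such that every column of U is either entrywise nonnegative or entrywise nonpositive, and θ ∈ ℝ^n. Then the feedforward code C(U,θ) has exactly one maximal codeword, namely σ_max = {i : θ_i < 0} ∪ {i : ∃ j with U_{ij} > 0}. That is, σ_max ∈ C(U,θ) and every codeword of C(U,θ) is a subset of σ_max. -/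
/-- If `U` respects Dale's law (every column entrywise nonnegative or entrywise
nonpositive), then the code `C(U,θ)` has exactly one maximal codeword, namely
`σ_max = {i : θ_i < 0} ∪ {i : ∃ j, U_{ij} > 0}`: the codeword `σ_max` is
realized, and every codeword is contained in it. -/
theorem dale_unique_maximal_codeword {n m : ℕ} (U : Fin n → Fin m → ℝ)
    (θ : Fin n → ℝ)
    (hDale : ∀ j, (∀ i, 0 ≤ U i j) ∨ (∀ i, U i j ≤ 0)) :
    ∃ σmax ∈ ffCode U θ,
      (∀ i, i ∈ σmax ↔ (θ i < 0 ∨ ∃ j, 0 < U i j)) ∧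
      ∀ σ ∈ ffCode U θ, σ ⊆ σmax := by
  classical
  set w : Fin m → ℝ := fun a => if ∀ i, 0 ≤ U i a then 1 else 0 with hw
  have hw0 : ∀ a, 0 ≤ w a := by
    intro a; simp only [hw]; split <;> norm_num
  set S : Fin n → ℝ := fun i => ∑ a, U i a * w a with hS
  have hterm : ∀ i a, 0 ≤ U i a * w a := by
    intro i a
    simp only [hw]
    split
    · rename_i h; simpa using h i
    · simp
  have hS0 : ∀ i, 0 ≤ S i := fun i => Finset.sum_nonneg fun a _ => hterm i a
  have hSpos : ∀ i, (∃ j, 0 < U i j) → 0 < S i := by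
    rintro i ⟨j, hj⟩
    have hcol : ∀ i', 0 ≤ U i' j := by
      rcases hDale j with h | h
      · exact h
      · exact absurd (h i) (not_le.mpr hj)
    have : U i j * w j = U i j := by simp [hw, hcol]
    have hle : U i j * w j ≤ S i :=
      Finset.single_le_sum (fun a _ => hterm i a) (Finset.mem_univ j)
    calc (0:ℝ) < U i j := hj
      _ = U i j * w j := this.symm
      _ ≤ S i := hle
  have hSzero : ∀ i, (¬∃ j, 0 < U i j) → S i = 0 := by
    intro i h
    push_neg at h
    apply Finset.sum_eq_zero
    intro a _
    simp only [hw]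
    split
    · rename_i hc
      have := le_antisymm (h a) (hc i)
      simp [this]
    · simp
  set T : ℝ := 1 + ∑ i, max (θ i / S i) 0 with hT
  have hT1 : (1:ℝ) ≤ T := by
    have h0 : 0 ≤ ∑ i, max (θ i / S i) 0 :=
      Finset.sum_nonneg fun i _ => le_max_right _ _
    rw [hT]; linarith
  have hTbig : ∀ i, θ i / S i < T := by
    intro i
    have h1 : max (θ i / S i) 0 ≤ ∑ k, max (θ k / S k) 0 :=
      Finset.single_le_sum (f := fun k => max (θ k / S k) 0) (fun k _ => le_max_right _ _) (Finset.mem_univ i)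
    have h2 : θ i / S i ≤ max (θ i / S i) 0 := le_max_left _ _
    rw [hT]; linarith
  refine ⟨Finset.univ.filter (fun i => θ i < 0 ∨ ∃ j, 0 < U i j), ?_, ?_, ?_⟩
  · refine ⟨fun a => T * w a, fun a => mul_nonneg (by linarith) (hw0 a), ?_⟩
    intro i
    have hsum : ∑ a, U i a * (T * w a) = T * S i := by
      rw [hS, Finset.mul_sum]
      exact Finset.sum_congr rfl fun a _ => by ring
    rw [hsum]
    simp only [Finset.mem_filter, Finset.mem_univ, true_and]
    constructor
    · rintro (h | h)
      · have := hS0 i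
        nlinarith
      · have hs := hSpos i h
        have := (div_lt_iff₀ hs).mp (hTbig i)
        linarith
    · intro h
      by_cases hex : ∃ j, 0 < U i j
      · exact Or.inr hex
      · left
        rw [hSzero i hex] at h
        simpa using h
  · intro i; simp
  · rintro σ ⟨y, hy, hmem⟩ i hi
    simp only [Finset.mem_filter, Finset.mem_univ, true_and]
    by_contra h
    push_neg at h
    obtain ⟨hθ, hU⟩ := h
    have := (hmem i).mp hi
    have hsum : ∑ a, U i a * y a ≤ 0 :=
      Finset.sum_nonpos fun a _ => mul_nonpos_of_nonpos_of_nonneg (hU a) (hy a)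
    linarith
end

section
/- (Topological corollary.) For every finite abstract simplicial complex Δ there exist m ∈ ℕ and a closed convex polyhedron P ⊆ ℝ^m_{≥0} (an intersection of finitely many closed half-spaces with the nonnegative orthant) such that ℝ^m_{≥0} \ P is homotopy equivalent to the geometric realization of Δ. -/
open scoped ContinuousMap

def stdVert (n : ℕ) (i : Fin n) : Fin n → ℝ := fun j => if j = i then 1 else 0

def geomReal {n : ℕ} (Δ : Set (Finset (Fin n))) : Set (Fin n → ℝ) :=
  ⋃ σ ∈ Δ, ⋃ (_ : σ.Nonempty), convexHull ℝ (stdVert n '' ↑σ)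

namespace OMPR

open Finset

variable {n : ℕ}

/-- the face-simplex on vertex set σ. -/
def simplexOn (n : ℕ) (σ : Finset (Fin n)) : Set (Fin n → ℝ) :=
  {x | (∀ i, 0 ≤ x i) ∧ ∑ i, x i = 1 ∧ ∀ i, x i ≠ 0 → i ∈ σ}

lemma convex_simplexOn (σ : Finset (Fin n)) : Convex ℝ (simplexOn n σ) := by
  intro x hx y hy a b ha hb hab
  refine ⟨fun i => add_nonneg (mul_nonneg ha (hx.1 i)) (mul_nonneg hb (hy.1 i)), ?_, ?_⟩
  · simp only [Pi.add_apply, Pi.smul_apply, smul_eq_mul]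
    rw [Finset.sum_add_distrib, ← Finset.mul_sum, ← Finset.mul_sum, hx.2.1, hy.2.1]
    simpa using hab
  · intro i hi
    simp only [Pi.add_apply, Pi.smul_apply, smul_eq_mul] at hi
    by_contra hmem
    have h1 : x i = 0 := by by_contra h; exact hmem (hx.2.2 i h)
    have h2 : y i = 0 := by by_contra h; exact hmem (hy.2.2 i h)
    simp [h1, h2] at hi

lemma hullChar (σ : Finset (Fin n)) :
    convexHull ℝ (stdVert n '' ↑σ) = simplexOn n σ := by
  apply Set.Subset.antisymm
  · apply convexHull_min _ (convex_simplexOn σ)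
    rintro x ⟨i, hi, rfl⟩
    refine ⟨fun j => by unfold stdVert; positivity, by simp [stdVert], ?_⟩
    intro j hj
    unfold stdVert at hj
    by_contra h
    have : j ≠ i := by rintro rfl; exact h (by simpa using hi)
    simp [this] at hj
  · intro x hx
    obtain ⟨hx0, hx1, hxs⟩ := hx
    have hsum : ∑ i ∈ σ, x i = 1 := by
      rw [← hx1]
      exact Finset.sum_subset (Finset.subset_univ σ) (by
        intro i _ hi
        by_contra h
        exact hi (hxs i h))
    have := Finset.centerMass_mem_convexHull (t := σ) (w := x)
      (fun i _ => hx0 i) (by rw [hsum]; norm_num) (z := stdVert n)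
      (fun i hi => Set.mem_image_of_mem _ (Finset.mem_coe.mpr hi))
    convert this using 1
    unfold Finset.centerMass
    rw [hsum, inv_one, one_smul]
    funext j
    simp only [Finset.sum_apply, Pi.smul_apply, smul_eq_mul]
    unfold stdVert
    rw [Finset.sum_congr rfl (fun i _ => by rw [mul_ite, mul_one, mul_zero])]
    rw [Finset.sum_ite_eq σ j x]
    split
    · rfl
    · next h => by_contra h2; exact h (hxs j h2)

lemma mem_geomReal_iff (Δ : Set (Finset (Fin n))) (x : Fin n → ℝ) :
    x ∈ geomReal Δ ↔ ∃ σ, σ ∈ Δ ∧ σ.Nonempty ∧ x ∈ simplexOn n σ := by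
  unfold geomReal
  simp only [Set.mem_iUnion, hullChar]
  tauto

-- === arrangement ===
open Finset
variable {n : ℕ}

noncomputable def E (n : ℕ) : Finset (Fin n) ≃ Fin (Fintype.card (Finset (Fin n))) :=
  Fintype.equivFin _

def M (n : ℕ) : ℕ := Fintype.card (Finset (Fin n))

noncomputable def T {n : ℕ} (a : Fin (M n)) : Finset (Fin n) := (E n).symm a

lemma T_inj {n : ℕ} : Function.Injective (T (n := n)) := (E n).symm.injective

lemma T_surj {n : ℕ} (τ : Finset (Fin n)) : ∃ a, T a = τ := ⟨E n τ, (E n).symm_apply_apply τ⟩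

def good (Δ : Set (Finset (Fin n))) (a : Fin (M n)) : Prop := T a ∈ Δ ∧ (T a).Nonempty

def cmp {n : ℕ} (a b : Fin (M n)) : Prop := T a ⊆ T b ∨ T b ⊆ T a

lemma cmp_refl (a : Fin (M n)) : cmp a a := Or.inl (subset_refl _)

open Classical in
noncomputable def w (Δ : Set (Finset (Fin n))) (a b : Fin (M n)) : ℝ :=
  if good Δ a then (if b = a then 1 else if good Δ b ∧ cmp a b then 0 else -1) else 0

noncomputable def dot (Δ : Set (Finset (Fin n))) (a : Fin (M n)) (z : Fin (M n) → ℝ) : ℝ :=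
  ∑ b, w Δ a b * z b

variable (Δ : Set (Finset (Fin n)))

lemma dot_linear (a : Fin (M n)) (s t : ℝ) (z y : Fin (M n) → ℝ) :
    dot Δ a (fun b => s * z b + t * y b) = s * dot Δ a z + t * dot Δ a y := by
  unfold dot
  rw [Finset.mul_sum, Finset.mul_sum, ← Finset.sum_add_distrib]
  congr 1; funext b; ring

-- pattern lemma pieces
lemma dot_good {a : Fin (M n)} {z : Fin (M n) → ℝ} (h : 0 < dot Δ a z) : good Δ a := by
  by_contra hg
  have : dot Δ a z = 0 := by
    unfold dot w
    rw [Finset.sum_congr rfl (fun b _ => by rw [if_neg hg, zero_mul])]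
    simp
  rw [this] at h; exact lt_irrefl _ h

lemma dot_le_of_bad {a b : Fin (M n)} {z : Fin (M n) → ℝ} (hz : ∀ c, 0 ≤ z c)
    (hab : b ≠ a) (hbad : ¬(good Δ b ∧ cmp a b)) (hga : good Δ a) :
    dot Δ a z ≤ z a - z b := by
  have : dot Δ a z ≤ ∑ c, ((if c = a then z c else 0) + (if c = b then -z c else 0)) := by
    apply Finset.sum_le_sum
    intro c _
    unfold w
    rw [if_pos hga]
    by_cases h1 : c = a
    · subst h1
      rw [if_pos rfl, if_pos rfl, if_neg (Ne.symm hab), one_mul, add_zero]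
    · rw [if_neg h1, if_neg h1, zero_add]
      by_cases h2 : c = b
      · subst h2
        rw [if_neg hbad, if_pos rfl]; ring_nf; exact le_refl _
      · rw [if_neg h2]
        split
        · simp
        · simp [hz c]
  calc dot Δ a z ≤ _ := this
    _ = z a - z b := by
        rw [Finset.sum_add_distrib, Finset.sum_ite_eq' Finset.univ a z,
          Finset.sum_ite_eq' Finset.univ b (fun c => -z c)]
        simp
        ring

/-- Lemma A: activated pairs are good and comparable. -/
lemma pattern_lemma {a b : Fin (M n)} {z : Fin (M n) → ℝ} (hz : ∀ c, 0 ≤ z c)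
    (ha : 0 < dot Δ a z) (hb : 0 < dot Δ b z) : good Δ a ∧ good Δ b ∧ cmp a b := by
  have hga := dot_good Δ ha
  have hgb := dot_good Δ hb
  refine ⟨hga, hgb, ?_⟩
  by_contra hc
  by_cases hab : a = b
  · exact hc (hab ▸ cmp_refl a)
  · have h1 : dot Δ a z ≤ z a - z b :=
      dot_le_of_bad Δ hz (Ne.symm hab) (fun h => hc h.2) hga
    have h2 : dot Δ b z ≤ z b - z a := by
      apply dot_le_of_bad Δ hz hab _ hgb
      rintro ⟨_, h⟩
      unfold cmp at h hc
      tauto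
    linarith

/-- Lemma B: on chain-supported vectors, dot a z = z a for a in the support. -/
lemma dot_chain {z : Fin (M n) → ℝ} (hz : ∀ c, 0 ≤ z c)
    (hch : ∀ a b, 0 < z a → 0 < z b → good Δ a ∧ good Δ b ∧ cmp a b)
    {a : Fin (M n)} (ha : 0 < z a) : dot Δ a z = z a := by
  have hga : good Δ a := (hch a a ha ha).1
  unfold dot
  have : ∀ c ∈ Finset.univ, w Δ a c * z c = if c = a then z c else 0 := by
    intro c _
    by_cases h1 : c = a
    · subst h1; unfold w; rw [if_pos hga, if_pos rfl, one_mul]; simp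
    · rw [if_neg h1]
      by_cases h2 : 0 < z c
      · have := hch a c ha h2
        unfold w
        rw [if_pos hga, if_neg h1, if_pos ⟨this.2.1, this.2.2⟩, zero_mul]
      · have hz0 : z c = 0 := le_antisymm (not_lt.mp h2) (hz c)
        rw [hz0, mul_zero]
  rw [Finset.sum_congr rfl this, Finset.sum_ite_eq' Finset.univ a z]
  simp


-- === sets and maps ===

lemma convex_pos {p q t : ℝ} (hp : 0 < p) (hq : 0 < q) (ht0 : 0 ≤ t) (ht1 : t ≤ 1) :
    0 < (1 - t) * p + t * q := by
  rcases lt_or_ge t 1 with h | h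
  · have h1 : 0 < (1 - t) * p := mul_pos (by linarith) hp
    nlinarith [mul_nonneg ht0 hq.le]
  · have : t = 1 := le_antisymm ht1 h
    subst this; simpa using hq

lemma convex_nn {p q t : ℝ} (hp : 0 ≤ p) (hq : 0 ≤ q) (ht0 : 0 ≤ t) (ht1 : t ≤ 1) :
    0 ≤ (1 - t) * p + t * q :=
  add_nonneg (mul_nonneg (by linarith) hp) (mul_nonneg ht0 hq)

def USet (Δ : Set (Finset (Fin n))) : Set (Fin (M n) → ℝ) :=
  {z | (∀ a, 0 ≤ z a) ∧ ∃ a, 0 < dot Δ a z}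

def SD (Δ : Set (Finset (Fin n))) : Set (Fin (M n) → ℝ) :=
  {z | (∀ a, 0 ≤ z a) ∧ (∃ a, 0 < z a) ∧
    ∀ a b, 0 < z a → 0 < z b → good Δ a ∧ good Δ b ∧ cmp a b}

noncomputable def fm (Δ : Set (Finset (Fin n))) (z : Fin (M n) → ℝ) (a : Fin (M n)) : ℝ :=
  max (dot Δ a z) 0

lemma fm_nonneg (z : Fin (M n) → ℝ) (a : Fin (M n)) : 0 ≤ fm Δ z a := le_max_right _ _

lemma fm_pos_iff (z : Fin (M n) → ℝ) (a : Fin (M n)) : 0 < fm Δ z a ↔ 0 < dot Δ a z := by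
  unfold fm
  constructor
  · intro h
    rcases lt_max_iff.mp h with h | h
    · exact h
    · exact absurd h (lt_irrefl 0)
  · intro h; exact lt_max_iff.mpr (Or.inl h)

lemma fm_mem_SD {z : Fin (M n) → ℝ} (hz : z ∈ USet Δ) : fm Δ z ∈ SD Δ := by
  obtain ⟨hz0, a, ha⟩ := hz
  refine ⟨fun c => fm_nonneg Δ z c, ⟨a, (fm_pos_iff Δ z a).mpr ha⟩, ?_⟩
  intro c d hc hd
  exact pattern_lemma Δ hz0 ((fm_pos_iff Δ z c).mp hc) ((fm_pos_iff Δ z d).mp hd)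

lemma SD_subset_USet {z : Fin (M n) → ℝ} (hz : z ∈ SD Δ) : z ∈ USet Δ := by
  obtain ⟨hz0, ⟨a, ha⟩, hch⟩ := hz
  exact ⟨hz0, a, by rw [dot_chain Δ hz0 hch ha]; exact ha⟩

/-- segment lemma, U side -/
lemma segU {z : Fin (M n) → ℝ} (hz : z ∈ USet Δ) {t : ℝ} (ht0 : 0 ≤ t) (ht1 : t ≤ 1) :
    (fun b => (1 - t) * z b + t * fm Δ z b) ∈ USet Δ := by
  obtain ⟨hz0, a, ha⟩ := hz
  constructor
  · intro b
    exact convex_nn (hz0 b) (fm_nonneg Δ z b) ht0 ht1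
  · refine ⟨a, ?_⟩
    rw [dot_linear]
    have hfa : 0 < fm Δ z a := (fm_pos_iff Δ z a).mpr ha
    have hSD := fm_mem_SD Δ ⟨hz0, a, ha⟩
    have heq : dot Δ a (fm Δ z) = fm Δ z a := dot_chain Δ hSD.1 hSD.2.2 hfa
    rw [heq]
    exact convex_pos ha hfa ht0 ht1

/-- segment lemma, SD side (for f ∘ ι ≃ id) -/
lemma segSD {z : Fin (M n) → ℝ} (hz : z ∈ SD Δ) {t : ℝ} (ht0 : 0 ≤ t) (ht1 : t ≤ 1) :
    (fun b => (1 - t) * z b + t * fm Δ z b) ∈ SD Δ := by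
  obtain ⟨hz0, ⟨a, ha⟩, hch⟩ := hz
  have key : ∀ c, 0 < (1 - t) * z c + t * fm Δ z c → 0 < dot Δ c z := by
    intro c hc
    by_cases h1 : 0 < z c
    · rw [← dot_chain Δ hz0 hch h1] at h1; exact h1
    · have hzc : z c = 0 := le_antisymm (not_lt.mp h1) (hz0 c)
      rw [hzc, mul_zero, zero_add] at hc
      have hfc : 0 < fm Δ z c := by
        rcases lt_or_ge 0 (fm Δ z c) with h | h
        · exact h
        · nlinarith [fm_nonneg Δ z c]
      exact (fm_pos_iff Δ z c).mp hfc
  refine ⟨fun c => convex_nn (hz0 c) (fm_nonneg Δ z c) ht0 ht1, ⟨a, ?_⟩, ?_⟩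
  · show 0 < (1 - t) * z a + t * fm Δ z a
    have heq : fm Δ z a = z a := by
      unfold fm
      rw [dot_chain Δ hz0 hch ha]
      exact max_eq_left (le_of_lt ha)
    rw [heq]
    exact convex_pos ha ha ht0 ht1
  · intro c d hc hd
    exact pattern_lemma Δ hz0 (key c hc) (key d hd)

-- === geometric side ===

noncomputable def mn (τ : Finset (Fin n)) (x : Fin n → ℝ) : ℝ :=
  if h : τ.Nonempty then τ.inf' h x else 0

noncomputable def mxc (τ : Finset (Fin n)) (x : Fin n → ℝ) : ℝ :=
  if h : τᶜ.Nonempty then τᶜ.sup' h x else 0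

noncomputable def dd (τ : Finset (Fin n)) (x : Fin n → ℝ) : ℝ := max (mn τ x - mxc τ x) 0

noncomputable def Qm (x : Fin n → ℝ) (a : Fin (M n)) : ℝ := dd (T a) x

noncomputable def bary (a : Fin (M n)) (i : Fin n) : ℝ :=
  if i ∈ T a then ((T a).card : ℝ)⁻¹ else 0

noncomputable def Hm (z : Fin (M n) → ℝ) (i : Fin n) : ℝ :=
  (∑ a, z a)⁻¹ * ∑ a, z a * bary a i

lemma bary_nonneg (a : Fin (M n)) (i : Fin n) : 0 ≤ bary a i := by
  unfold bary; split
  · positivity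
  · exact le_refl 0

lemma dd_nonneg (τ : Finset (Fin n)) (x : Fin n → ℝ) : 0 ≤ dd τ x := le_max_right _ _

lemma dd_pos_iff (τ : Finset (Fin n)) (x : Fin n → ℝ) :
    0 < dd τ x ↔ mxc τ x < mn τ x := by
  unfold dd
  constructor
  · intro h
    rcases lt_max_iff.mp h with h | h
    · linarith
    · exact absurd h (lt_irrefl 0)
  · intro h; exact lt_max_iff.mpr (Or.inl (by linarith))

lemma mn_le {τ : Finset (Fin n)} {x : Fin n → ℝ} {i : Fin n} (hi : i ∈ τ) :
    mn τ x ≤ x i := by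
  unfold mn; rw [dif_pos ⟨i, hi⟩]; exact Finset.inf'_le x hi

lemma le_mxc {τ : Finset (Fin n)} {x : Fin n → ℝ} {j : Fin n} (hj : j ∉ τ) :
    x j ≤ mxc τ x := by
  have hj' : j ∈ τᶜ := Finset.mem_compl.mpr hj
  unfold mxc; rw [dif_pos ⟨j, hj'⟩]; exact Finset.le_sup' x hj'

/-- S1 -/
lemma dd_sep {τ : Finset (Fin n)} {x : Fin n → ℝ} (h : 0 < dd τ x)
    {i j : Fin n} (hi : i ∈ τ) (hj : j ∉ τ) : x j < x i := by
  have := (dd_pos_iff τ x).mp h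
  calc x j ≤ mxc τ x := le_mxc hj
    _ < mn τ x := this
    _ ≤ x i := mn_le hi

/-- S2 -/
lemma dd_pos_coord {τ : Finset (Fin n)} {x : Fin n → ℝ} (hx : ∀ i, 0 ≤ x i)
    (h : 0 < dd τ x) {i : Fin n} (hi : i ∈ τ) : 0 < x i := by
  by_cases hc : τᶜ.Nonempty
  · obtain ⟨j, hj⟩ := hc
    have := dd_sep h hi (Finset.mem_compl.mp hj)
    have := hx j
    linarith
  · have hmx : mxc τ x = 0 := by unfold mxc; rw [dif_neg hc]
    have := (dd_pos_iff τ x).mp h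
    rw [hmx] at this
    calc (0:ℝ) < mn τ x := this
      _ ≤ x i := mn_le hi

/-- S3 -/
lemma dd_pos_nonempty {τ : Finset (Fin n)} {x : Fin n → ℝ}
    (hex : ∃ i, 0 < x i) (h : 0 < dd τ x) : τ.Nonempty := by
  by_contra hne
  obtain ⟨i, hi⟩ := hex
  have hτ : ¬ τ.Nonempty := hne
  have hmn : mn τ x = 0 := by unfold mn; rw [dif_neg hτ]
  have hic : i ∈ τᶜ := Finset.mem_compl.mpr (fun hmem => hτ ⟨i, hmem⟩)
  have hmx : 0 < mxc τ x := lt_of_lt_of_le hi (le_mxc (Finset.mem_compl.mp hic))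
  have := (dd_pos_iff τ x).mp h
  linarith

/-- CHAIN -/
lemma dd_chain {τ ρ : Finset (Fin n)} {x : Fin n → ℝ}
    (hτ : 0 < dd τ x) (hρ : 0 < dd ρ x) : τ ⊆ ρ ∨ ρ ⊆ τ := by
  by_contra hc
  push_neg at hc
  obtain ⟨h1, h2⟩ := hc
  obtain ⟨i, hiτ, hiρ⟩ := Finset.not_subset.mp h1
  obtain ⟨j, hjρ, hjτ⟩ := Finset.not_subset.mp h2
  have := dd_sep hτ hiτ hjτ
  have := dd_sep hρ hjρ hiρ
  linarith

-- === Q and H lemmas ===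

variable {Δ}

lemma simplex_ex_pos {σ : Finset (Fin n)} {x : Fin n → ℝ} (hx : x ∈ simplexOn n σ) :
    ∃ i, 0 < x i := by
  by_contra hc
  push_neg at hc
  have : ∀ i, x i = 0 := fun i => le_antisymm (hc i) (hx.1 i)
  have : (1:ℝ) = 0 := by rw [← hx.2.1]; simp [this]
  norm_num at this

/-- QSUPP -/
lemma dd_pos_face (hdown : ∀ σ ∈ Δ, ∀ τ ⊆ σ, τ ∈ Δ) {σ : Finset (Fin n)} (hσ : σ ∈ Δ)
    {x : Fin n → ℝ} (hx : x ∈ simplexOn n σ)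
    {τ : Finset (Fin n)} (h : 0 < dd τ x) : τ ∈ Δ ∧ τ.Nonempty := by
  have hsub : τ ⊆ σ := by
    intro i hi
    exact hx.2.2 i (ne_of_gt (dd_pos_coord hx.1 h hi))
  exact ⟨hdown σ hσ τ hsub, dd_pos_nonempty (simplex_ex_pos hx) h⟩

/-- QPOS : dd of the support is positive. -/
lemma dd_supp_pos {σ : Finset (Fin n)} {x : Fin n → ℝ} (hx : x ∈ simplexOn n σ) :
    0 < dd (Finset.univ.filter (fun i => x i ≠ 0)) x := by
  set s := Finset.univ.filter (fun i => x i ≠ 0) with hs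
  obtain ⟨i0, hi0⟩ := simplex_ex_pos hx
  have hi0s : i0 ∈ s := by simp [hs, ne_of_gt hi0]
  have hsne : s.Nonempty := ⟨i0, hi0s⟩
  rw [dd_pos_iff]
  have hmn : 0 < mn s x := by
    unfold mn; rw [dif_pos hsne]
    rw [Finset.lt_inf'_iff]
    intro i hi
    have : x i ≠ 0 := (Finset.mem_filter.mp hi).2
    exact lt_of_le_of_ne (hx.1 i) (Ne.symm this)
  have hmx : mxc s x ≤ 0 := by
    unfold mxc
    split
    · next hc =>
        apply Finset.sup'_le
        intro j hj
        have : ¬ (x j ≠ 0) := fun h => (Finset.mem_compl.mp hj) (by simp [hs, h])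
        push_neg at this
        rw [this]
    · exact le_refl 0
  linarith

lemma Qm_mem_SD (hdown : ∀ σ ∈ Δ, ∀ τ ⊆ σ, τ ∈ Δ) {x : Fin n → ℝ}
    (hx : x ∈ geomReal Δ) : Qm x ∈ SD Δ := by
  obtain ⟨σ, hσ, hσne, hxs⟩ := (mem_geomReal_iff Δ x).mp hx
  refine ⟨fun a => dd_nonneg _ _, ?_, ?_⟩
  · obtain ⟨a, ha⟩ := T_surj (Finset.univ.filter (fun i => x i ≠ 0))
    exact ⟨a, by unfold Qm; rw [ha]; exact dd_supp_pos hxs⟩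
  · intro a b ha hb
    have hfa := dd_pos_face hdown hσ hxs ha
    have hfb := dd_pos_face hdown hσ hxs hb
    exact ⟨⟨hfa.1, hfa.2⟩, ⟨hfb.1, hfb.2⟩, dd_chain ha hb⟩

-- Hm lemmas
lemma sum_pos_of_SD {z : Fin (M n) → ℝ} (hz : z ∈ SD Δ) : 0 < ∑ a, z a := by
  obtain ⟨hz0, ⟨a, ha⟩, _⟩ := hz
  exact Finset.sum_pos' (fun b _ => hz0 b) ⟨a, Finset.mem_univ a, ha⟩

lemma Hm_nonneg {z : Fin (M n) → ℝ} (hz0 : ∀ a, 0 ≤ z a) (i : Fin n) : 0 ≤ Hm z i := by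
  unfold Hm
  apply mul_nonneg
  · exact inv_nonneg.mpr (Finset.sum_nonneg (fun a _ => hz0 a))
  · exact Finset.sum_nonneg (fun a _ => mul_nonneg (hz0 a) (bary_nonneg a i))

lemma Hm_sum {z : Fin (M n) → ℝ} (hz : z ∈ SD Δ) : ∑ i, Hm z i = 1 := by
  unfold Hm
  rw [← Finset.mul_sum]
  rw [Finset.sum_comm]
  have : ∀ a ∈ Finset.univ, ∑ i, z a * bary a i = z a := by
    intro a _
    rw [← Finset.mul_sum]
    by_cases hza : 0 < z a
    · have hne : (T a).Nonempty := ((hz.2.2 a a hza hza).1).2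
      have hcard : (0:ℝ) < (T a).card := by
        have := Finset.card_pos.mpr hne
        exact_mod_cast this
      have : ∑ i, bary a i = 1 := by
        unfold bary
        rw [Finset.sum_ite_mem, Finset.univ_inter, Finset.sum_const]
        rw [nsmul_eq_mul, mul_inv_cancel₀ (ne_of_gt hcard)]
      rw [this, mul_one]
    · have : z a = 0 := le_antisymm (not_lt.mp hza) (hz.1 a)
      simp [this]
  rw [Finset.sum_congr rfl this]
  exact inv_mul_cancel₀ (ne_of_gt (sum_pos_of_SD hz))

lemma Hm_supp {z : Fin (M n) → ℝ} (hz0 : ∀ a, 0 ≤ z a) {i : Fin n} (h : Hm z i ≠ 0) :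
    ∃ a, 0 < z a ∧ i ∈ T a := by
  by_contra hc
  push_neg at hc
  apply h
  unfold Hm
  have hterm : ∀ a ∈ Finset.univ, z a * bary a i = 0 := by
    intro a _
    by_cases hza : 0 < z a
    · have : i ∉ T a := hc a hza
      unfold bary; rw [if_neg this, mul_zero]
    · have : z a = 0 := le_antisymm (not_lt.mp hza) (hz0 a)
      rw [this, zero_mul]
  rw [Finset.sum_congr rfl hterm]
  simp

lemma posOf {z : Fin (M n) → ℝ} (hz0 : ∀ a, 0 ≤ z a) (hsum : 0 < ∑ a, z a)
    {a : Fin (M n)} (ha : 0 < z a) {i : Fin n} (hi : i ∈ T a) : 0 < Hm z i := by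
  unfold Hm
  apply mul_pos (inv_pos.mpr hsum)
  have hcard : (0:ℝ) < ((T a).card : ℝ) := by
    have := Finset.card_pos.mpr ⟨i, hi⟩
    exact_mod_cast this
  have hterm : 0 < z a * bary a i := by
    apply mul_pos ha
    unfold bary; rw [if_pos hi]
    exact inv_pos.mpr hcard
  calc (0:ℝ) < z a * bary a i := hterm
    _ ≤ ∑ b, z b * bary b i :=
        Finset.single_le_sum (fun b _ => mul_nonneg (hz0 b) (bary_nonneg b i)) (Finset.mem_univ a)

lemma maxChain {z : Fin (M n) → ℝ} (hz : z ∈ SD Δ) :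
    ∃ a0, 0 < z a0 ∧ ∀ b, 0 < z b → T b ⊆ T a0 := by
  obtain ⟨hz0, ⟨a, ha⟩, hch⟩ := hz
  obtain ⟨a0, ha0, hmax⟩ := Finset.exists_max_image (Finset.univ.filter (fun b => 0 < z b))
    (fun b => (T b).card) ⟨a, by simp [ha]⟩
  have hza0 : 0 < z a0 := (Finset.mem_filter.mp ha0).2
  refine ⟨a0, hza0, ?_⟩
  intro b hb
  have hcmp := (hch a0 b hza0 hb).2.2
  rcases hcmp with h | h
  · have : (T b).card ≤ (T a0).card := hmax b (by simp [hb])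
    rw [Finset.eq_of_subset_of_card_le h this]
  · exact h

-- === H maps into the realization ===

lemma Hm_mem_simplex {z : Fin (M n) → ℝ} (hz : z ∈ SD Δ)
    {a0 : Fin (M n)} (ha0 : 0 < z a0) (hmax : ∀ b, 0 < z b → T b ⊆ T a0) :
    Hm z ∈ simplexOn n (T a0) := by
  refine ⟨Hm_nonneg hz.1, Hm_sum hz, ?_⟩
  intro i hi
  obtain ⟨a, ha, hia⟩ := Hm_supp hz.1 hi
  exact hmax a ha hia

lemma Hm_mem_geomReal {z : Fin (M n) → ℝ} (hz : z ∈ SD Δ) : Hm z ∈ geomReal Δ := by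
  obtain ⟨a0, ha0, hmax⟩ := maxChain hz
  have hg : good Δ a0 := (hz.2.2 a0 a0 ha0 ha0).1
  exact (mem_geomReal_iff Δ (Hm z)).mpr ⟨T a0, hg.1, hg.2, Hm_mem_simplex hz ha0 hmax⟩

/-- KEY: superlevel sets of `Hm z` are supports of `z`. -/
lemma key_superlevel {z : Fin (M n) → ℝ} (hz : z ∈ SD Δ)
    {τ : Finset (Fin n)} (h : 0 < dd τ (Hm z)) : ∃ a, 0 < z a ∧ T a = τ := by
  obtain ⟨hz0, ⟨aw, haw⟩, hch⟩ := hz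
  have hsum : 0 < ∑ a, z a := sum_pos_of_SD ⟨hz0, ⟨aw, haw⟩, hch⟩
  set x := Hm z with hxdef
  -- selection of minimal chain element containing each i
  have hsel : ∀ i, ∃ a, (0 < x i → (0 < z a ∧ i ∈ T a) ∧
      ∀ b, 0 < z b → i ∈ T b → (T a).card ≤ (T b).card) := by
    intro i
    by_cases hxi : 0 < x i
    · have hne : (Finset.univ.filter (fun b => 0 < z b ∧ i ∈ T b)).Nonempty := by
        obtain ⟨a, ha, hia⟩ := Hm_supp hz0 (ne_of_gt hxi)
        exact ⟨a, by simp [ha, hia]⟩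
      obtain ⟨a, hamem, hamin⟩ := Finset.exists_min_image _ (fun b => (T b).card) hne
      have := Finset.mem_filter.mp hamem
      exact ⟨a, fun _ => ⟨this.2, fun b hb hib => hamin b (by simp [hb, hib])⟩⟩
    · exact ⟨aw, fun hx => absurd hx hxi⟩
  choose g hg using hsel
  -- F1: characterization of membership
  have hF1 : ∀ i, 0 < x i → ∀ b, 0 < z b → (i ∈ T b ↔ T (g i) ⊆ T b) := by
    intro i hxi b hb
    obtain ⟨⟨hzg, hig⟩, hmin⟩ := hg i hxi
    constructor
    · intro hib
      rcases (hch (g i) b hzg hb).2.2 with hcase | hcase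
      · exact hcase
      · rw [Finset.eq_of_subset_of_card_le hcase (hmin b hb hib)]
    · intro hsub; exact hsub hig
  -- F2: monotonicity
  have hF2 : ∀ i j, 0 < x i → 0 < x j → T (g j) ⊆ T (g i) → x i ≤ x j := by
    intro i j hxi hxj hsub
    rw [hxdef]
    unfold Hm
    apply mul_le_mul_of_nonneg_left _ (inv_nonneg.mpr (le_of_lt hsum))
    apply Finset.sum_le_sum
    intro b _
    by_cases hzb : 0 < z b
    · by_cases hib : i ∈ T b
      · have h1 : T (g i) ⊆ T b := (hF1 i hxi b hzb).mp hib
        have h2 : j ∈ T b := (hF1 j hxj b hzb).mpr (hsub.trans h1)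
        unfold bary
        rw [if_pos hib, if_pos h2]
      · unfold bary
        rw [if_neg hib, mul_zero]
        apply mul_nonneg (hz0 b)
        split
        · positivity
        · exact le_refl 0
    · have : z b = 0 := le_antisymm (not_lt.mp hzb) (hz0 b)
      simp [this]
  -- x has a positive coordinate
  have hxex : ∃ i, 0 < x i := by
    obtain ⟨i, hi⟩ := ((hch aw aw haw haw).1).2
    exact ⟨i, posOf hz0 hsum haw hi⟩
  have hτne : τ.Nonempty := dd_pos_nonempty hxex h
  have hxpos : ∀ i ∈ τ, 0 < x i := fun i hi =>
    dd_pos_coord (fun j => Hm_nonneg hz0 j) h hi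
  obtain ⟨istar, histar, himax⟩ := Finset.exists_max_image τ (fun i => (T (g i)).card) hτne
  have hxistar : 0 < x istar := hxpos istar histar
  obtain ⟨⟨hzgi, higi⟩, _⟩ := hg istar hxistar
  refine ⟨g istar, hzgi, ?_⟩
  apply Finset.Subset.antisymm
  · -- T (g istar) ⊆ τ
    intro j hj
    by_contra hjτ
    have hxj : 0 < x j := posOf hz0 hsum hzgi hj
    have hsub : T (g j) ⊆ T (g istar) := (hF1 j hxj (g istar) hzgi).mp hj
    have hle : x istar ≤ x j := hF2 istar j hxistar hxj hsub
    have := dd_sep h histar hjτ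
    linarith
  · -- τ ⊆ T (g istar)
    intro i hi
    have hxi : 0 < x i := hxpos i hi
    obtain ⟨⟨hzg, hig⟩, _⟩ := hg i hxi
    rcases (hch (g i) (g istar) hzg hzgi).2.2 with hcase | hcase
    · exact hcase hig
    · have : T (g istar) = T (g i) := Finset.eq_of_subset_of_card_le hcase (himax i hi)
      rw [this]; exact hig

-- === segment lemmas for the second homotopy equivalence ===

lemma seg_geomReal (hdown : ∀ σ ∈ Δ, ∀ τ ⊆ σ, τ ∈ Δ) {x : Fin n → ℝ}
    (hx : x ∈ geomReal Δ) {t : ℝ} (ht0 : 0 ≤ t) (ht1 : t ≤ 1) :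
    (fun i => (1 - t) * x i + t * Hm (Qm x) i) ∈ geomReal Δ := by
  obtain ⟨σ, hσ, hσne, hxs⟩ := (mem_geomReal_iff Δ x).mp hx
  set s := Finset.univ.filter (fun i => x i ≠ 0) with hsdef
  have hmem_s : ∀ i, x i ≠ 0 → i ∈ s := fun i hi => by simp [hsdef, hi]
  have hsσ : s ⊆ σ := fun i hi => hxs.2.2 i (by simpa [hsdef] using hi)
  have hsΔ : s ∈ Δ := hdown σ hσ s hsσ
  obtain ⟨i0, hi0⟩ := simplex_ex_pos hxs
  have hsne : s.Nonempty := ⟨i0, hmem_s i0 (ne_of_gt hi0)⟩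
  have hQ : Qm x ∈ SD Δ := Qm_mem_SD hdown hx
  have hy : Hm (Qm x) ∈ simplexOn n s := by
    refine ⟨Hm_nonneg hQ.1, Hm_sum hQ, ?_⟩
    intro i hi
    obtain ⟨a, ha, hia⟩ := Hm_supp hQ.1 hi
    have : 0 < dd (T a) x := ha
    exact hmem_s i (ne_of_gt (dd_pos_coord hxs.1 this hia))
  rw [mem_geomReal_iff]
  refine ⟨s, hsΔ, hsne, ?_, ?_, ?_⟩
  · intro i
    exact convex_nn (hxs.1 i) (hy.1 i) ht0 ht1
  · rw [Finset.sum_add_distrib, ← Finset.mul_sum, ← Finset.mul_sum, hxs.2.1, hy.2.1]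
    ring
  · intro i hi
    by_cases h1 : x i = 0
    · by_cases h2 : Hm (Qm x) i = 0
      · exfalso; apply hi; show (1 - t) * x i + t * Hm (Qm x) i = 0; rw [h1, h2]; ring
      · exact hy.2.2 i h2
    · exact hmem_s i h1

lemma seg_SD2 {z : Fin (M n) → ℝ} (hz : z ∈ SD Δ) {t : ℝ} (ht0 : 0 ≤ t) (ht1 : t ≤ 1) :
    (fun a => (1 - t) * z a + t * Qm (Hm z) a) ∈ SD Δ := by
  have hz0 := hz.1
  have hsum := sum_pos_of_SD hz
  have hsupp : ∀ a, 0 < Qm (Hm z) a → 0 < z a := by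
    intro a ha
    obtain ⟨a', ha', hTa⟩ := key_superlevel hz ha
    rwa [T_inj hTa] at ha'
  have hposz : ∀ a, 0 < (1 - t) * z a + t * Qm (Hm z) a → 0 < z a := by
    intro a ha
    by_cases h1 : 0 < z a
    · exact h1
    · have hz0a : z a = 0 := le_antisymm (not_lt.mp h1) (hz0 a)
      rw [hz0a, mul_zero, zero_add] at ha
      rcases lt_or_ge 0 (Qm (Hm z) a) with h | h
      · exact hsupp a h
      · nlinarith
  obtain ⟨a0, ha0, hmax⟩ := maxChain hz
  have hg0 : good Δ a0 := (hz.2.2 a0 a0 ha0 ha0).1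
  have hQ0 : 0 < Qm (Hm z) a0 := by
    unfold Qm
    rw [dd_pos_iff]
    have hmn : 0 < mn (T a0) (Hm z) := by
      unfold mn
      rw [dif_pos hg0.2]
      rw [Finset.lt_inf'_iff]
      intro i hi
      exact posOf hz0 hsum ha0 hi
    have hmx : mxc (T a0) (Hm z) ≤ 0 := by
      unfold mxc
      split
      · next hc =>
          apply Finset.sup'_le
          intro j hj
          by_contra hcon
          push_neg at hcon
          obtain ⟨a, ha, hja⟩ := Hm_supp hz0 (ne_of_gt hcon)
          exact (Finset.mem_compl.mp hj) (hmax a ha hja)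
      · exact le_refl 0
    linarith
  refine ⟨fun a => convex_nn (hz0 a) (dd_nonneg _ _) ht0 ht1,
    ⟨a0, convex_pos ha0 hQ0 ht0 ht1⟩, ?_⟩
  intro a b ha hb
  exact hz.2.2 a b (hposz a ha) (hposz b hb)

-- === continuity ===

lemma cont_inf' (τ : Finset (Fin n)) (h : τ.Nonempty) :
    Continuous fun x : Fin n → ℝ => τ.inf' h x := by
  induction τ using Finset.cons_induction with
  | empty => exact absurd h (by simp)
  | cons a s ha ih =>
      rcases s.eq_empty_or_nonempty with rfl | hs
      · simpa using continuous_apply a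
      · have : (fun x : Fin n → ℝ => (Finset.cons a s ha).inf' h x)
            = fun x => min (x a) (s.inf' hs x) := by
          funext x
          rw [Finset.inf'_cons]
        rw [this]
        exact Continuous.min (continuous_apply a) (ih hs)

lemma cont_sup' (τ : Finset (Fin n)) (h : τ.Nonempty) :
    Continuous fun x : Fin n → ℝ => τ.sup' h x := by
  induction τ using Finset.cons_induction with
  | empty => exact absurd h (by simp)
  | cons a s ha ih =>
      rcases s.eq_empty_or_nonempty with rfl | hs
      · simpa using continuous_apply a
      · have : (fun x : Fin n → ℝ => (Finset.cons a s ha).sup' h x)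
            = fun x => max (x a) (s.sup' hs x) := by
          funext x
          rw [Finset.sup'_cons]
        rw [this]
        exact Continuous.max (continuous_apply a) (ih hs)

lemma cont_mn (τ : Finset (Fin n)) : Continuous fun x : Fin n → ℝ => mn τ x := by
  unfold mn
  split
  · next h => exact cont_inf' τ h
  · exact continuous_const

lemma cont_mxc (τ : Finset (Fin n)) : Continuous fun x : Fin n → ℝ => mxc τ x := by
  unfold mxc
  split
  · next h => exact cont_sup' τᶜ h
  · exact continuous_const

lemma cont_dd (τ : Finset (Fin n)) : Continuous fun x : Fin n → ℝ => dd τ x :=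
  Continuous.max ((cont_mn τ).sub (cont_mxc τ)) continuous_const

lemma cont_Qm : Continuous fun x : Fin n → ℝ => Qm x :=
  continuous_pi (fun a => cont_dd (T a))

variable (Δ)

lemma cont_dot (a : Fin (M n)) : Continuous fun z : Fin (M n) → ℝ => dot Δ a z :=
  continuous_finset_sum _ (fun b _ => (continuous_const).mul (continuous_apply b))

lemma cont_fm : Continuous fun z : Fin (M n) → ℝ => fm Δ z :=
  continuous_pi (fun a => (cont_dot Δ a).max continuous_const)

-- === bundled maps ===

noncomputable def fC : C(↥(USet Δ), ↥(SD Δ)) :=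
  ⟨fun z => ⟨fm Δ z.1, fm_mem_SD Δ z.2⟩,
    Continuous.subtype_mk ((cont_fm Δ).comp continuous_subtype_val) _⟩

def iC : C(↥(SD Δ), ↥(USet Δ)) :=
  ⟨fun z => ⟨z.1, SD_subset_USet Δ z.2⟩, Continuous.subtype_mk continuous_subtype_val _⟩

lemma cont_Hm_SD : Continuous fun z : ↥(SD Δ) => Hm z.1 := by
  apply continuous_pi
  intro i
  unfold Hm
  apply Continuous.mul
  · apply Continuous.inv₀
    · exact (continuous_finset_sum _ (fun a _ => continuous_apply a)).comp continuous_subtype_val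
    · exact fun z => ne_of_gt (sum_pos_of_SD z.2)
  · exact (continuous_finset_sum _ (fun a _ => (continuous_apply a).mul continuous_const)).comp
      continuous_subtype_val

noncomputable def HC : C(↥(SD Δ), ↥(geomReal Δ)) :=
  ⟨fun z => ⟨Hm z.1, Hm_mem_geomReal z.2⟩, Continuous.subtype_mk (cont_Hm_SD Δ) _⟩

noncomputable def QC (hdown : ∀ σ ∈ Δ, ∀ τ ⊆ σ, τ ∈ Δ) : C(↥(geomReal Δ), ↥(SD Δ)) :=
  ⟨fun x => ⟨Qm x.1, Qm_mem_SD hdown x.2⟩,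
    Continuous.subtype_mk (cont_Qm.comp continuous_subtype_val) _⟩

-- === homotopies ===

noncomputable def htpy1 : ((iC Δ).comp (fC Δ)).Homotopy (ContinuousMap.id ↥(USet Δ)) where
  toFun := fun p => ⟨fun b => (1 - (1 - (p.1 : ℝ))) * p.2.1 b + (1 - (p.1 : ℝ)) * fm Δ p.2.1 b,
      segU Δ p.2.2 (by linarith [p.1.2.2]) (by linarith [p.1.2.1])⟩
  continuous_toFun := by
    apply Continuous.subtype_mk
    apply continuous_pi
    intro b
    have h1 : Continuous fun p : ↑unitInterval × ↥(USet Δ) => (p.1 : ℝ) :=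
      continuous_subtype_val.comp continuous_fst
    have h2 : Continuous fun p : ↑unitInterval × ↥(USet Δ) => p.2.1 b :=
      (continuous_apply b).comp (continuous_subtype_val.comp continuous_snd)
    have h3 : Continuous fun p : ↑unitInterval × ↥(USet Δ) => fm Δ p.2.1 b :=
      ((continuous_apply b).comp (cont_fm Δ)).comp (continuous_subtype_val.comp continuous_snd)
    exact ((continuous_const.sub (continuous_const.sub h1)).mul h2).add
      ((continuous_const.sub h1).mul h3)
  map_zero_left := fun z => by
    apply Subtype.ext
    funext b
    show (1 - (1 - ((0:unitInterval) : ℝ))) * z.1 b + (1 - ((0:unitInterval) : ℝ)) * fm Δ z.1 b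
      = fm Δ z.1 b
    norm_num
  map_one_left := fun z => by
    apply Subtype.ext
    funext b
    show (1 - (1 - ((1:unitInterval) : ℝ))) * z.1 b + (1 - ((1:unitInterval) : ℝ)) * fm Δ z.1 b
      = z.1 b
    norm_num

noncomputable def htpy2 : ((fC Δ).comp (iC Δ)).Homotopy (ContinuousMap.id ↥(SD Δ)) where
  toFun := fun p => ⟨fun b => (1 - (1 - (p.1 : ℝ))) * p.2.1 b + (1 - (p.1 : ℝ)) * fm Δ p.2.1 b,
      segSD Δ p.2.2 (by linarith [p.1.2.2]) (by linarith [p.1.2.1])⟩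
  continuous_toFun := by
    apply Continuous.subtype_mk
    apply continuous_pi
    intro b
    have h1 : Continuous fun p : ↑unitInterval × ↥(SD Δ) => (p.1 : ℝ) :=
      continuous_subtype_val.comp continuous_fst
    have h2 : Continuous fun p : ↑unitInterval × ↥(SD Δ) => p.2.1 b :=
      (continuous_apply b).comp (continuous_subtype_val.comp continuous_snd)
    have h3 : Continuous fun p : ↑unitInterval × ↥(SD Δ) => fm Δ p.2.1 b :=
      ((continuous_apply b).comp (cont_fm Δ)).comp (continuous_subtype_val.comp continuous_snd)
    exact ((continuous_const.sub (continuous_const.sub h1)).mul h2).add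
      ((continuous_const.sub h1).mul h3)
  map_zero_left := fun z => by
    apply Subtype.ext
    funext b
    show (1 - (1 - ((0:unitInterval) : ℝ))) * z.1 b + (1 - ((0:unitInterval) : ℝ)) * fm Δ z.1 b
      = fm Δ z.1 b
    norm_num
  map_one_left := fun z => by
    apply Subtype.ext
    funext b
    show (1 - (1 - ((1:unitInterval) : ℝ))) * z.1 b + (1 - ((1:unitInterval) : ℝ)) * fm Δ z.1 b
      = z.1 b
    norm_num

noncomputable def htpy3 (hdown : ∀ σ ∈ Δ, ∀ τ ⊆ σ, τ ∈ Δ) :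
    ((QC Δ hdown).comp (HC Δ)).Homotopy (ContinuousMap.id ↥(SD Δ)) where
  toFun := fun p => ⟨fun a => (1 - (1 - (p.1 : ℝ))) * p.2.1 a +
        (1 - (p.1 : ℝ)) * Qm (Hm p.2.1) a,
      seg_SD2 p.2.2 (by linarith [p.1.2.2]) (by linarith [p.1.2.1])⟩
  continuous_toFun := by
    apply Continuous.subtype_mk
    apply continuous_pi
    intro a
    have h1 : Continuous fun p : ↑unitInterval × ↥(SD Δ) => (p.1 : ℝ) :=
      continuous_subtype_val.comp continuous_fst
    have h2 : Continuous fun p : ↑unitInterval × ↥(SD Δ) => p.2.1 a :=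
      (continuous_apply a).comp (continuous_subtype_val.comp continuous_snd)
    have h3 : Continuous fun p : ↑unitInterval × ↥(SD Δ) => Qm (Hm p.2.1) a :=
      ((continuous_apply a).comp (cont_Qm.comp (cont_Hm_SD Δ))).comp continuous_snd
    exact ((continuous_const.sub (continuous_const.sub h1)).mul h2).add
      ((continuous_const.sub h1).mul h3)
  map_zero_left := fun z => by
    apply Subtype.ext
    funext a
    show (1 - (1 - ((0:unitInterval) : ℝ))) * z.1 a +
      (1 - ((0:unitInterval) : ℝ)) * Qm (Hm z.1) a = Qm (Hm z.1) a
    norm_num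
  map_one_left := fun z => by
    apply Subtype.ext
    funext a
    show (1 - (1 - ((1:unitInterval) : ℝ))) * z.1 a +
      (1 - ((1:unitInterval) : ℝ)) * Qm (Hm z.1) a = z.1 a
    norm_num

noncomputable def htpy4 (hdown : ∀ σ ∈ Δ, ∀ τ ⊆ σ, τ ∈ Δ) :
    ((HC Δ).comp (QC Δ hdown)).Homotopy (ContinuousMap.id ↥(geomReal Δ)) where
  toFun := fun p => ⟨fun i => (1 - (1 - (p.1 : ℝ))) * p.2.1 i +
        (1 - (p.1 : ℝ)) * Hm (Qm p.2.1) i,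
      seg_geomReal hdown p.2.2 (by linarith [p.1.2.2]) (by linarith [p.1.2.1])⟩
  continuous_toFun := by
    apply Continuous.subtype_mk
    apply continuous_pi
    intro i
    have h1 : Continuous fun p : ↑unitInterval × ↥(geomReal Δ) => (p.1 : ℝ) :=
      continuous_subtype_val.comp continuous_fst
    have h2 : Continuous fun p : ↑unitInterval × ↥(geomReal Δ) => p.2.1 i :=
      (continuous_apply i).comp (continuous_subtype_val.comp continuous_snd)
    have h3 : Continuous fun p : ↑unitInterval × ↥(geomReal Δ) => Hm (Qm p.2.1) i := by
      have : Continuous fun x : ↥(geomReal Δ) => ((HC Δ) ((QC Δ hdown) x)).1 :=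
        continuous_subtype_val.comp ((HC Δ).continuous.comp (QC Δ hdown).continuous)
      exact ((continuous_apply i).comp this).comp continuous_snd
    exact ((continuous_const.sub (continuous_const.sub h1)).mul h2).add
      ((continuous_const.sub h1).mul h3)
  map_zero_left := fun z => by
    apply Subtype.ext
    funext i
    show (1 - (1 - ((0:unitInterval) : ℝ))) * z.1 i +
      (1 - ((0:unitInterval) : ℝ)) * Hm (Qm z.1) i = Hm (Qm z.1) i
    norm_num
  map_one_left := fun z => by
    apply Subtype.ext
    funext i
    show (1 - (1 - ((1:unitInterval) : ℝ))) * z.1 i +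
      (1 - ((1:unitInterval) : ℝ)) * Hm (Qm z.1) i = z.1 i
    norm_num

noncomputable def equiv1 : ↥(USet Δ) ≃ₕ ↥(SD Δ) :=
  ⟨fC Δ, iC Δ, ⟨htpy1 Δ⟩, ⟨htpy2 Δ⟩⟩

noncomputable def equiv2 (hdown : ∀ σ ∈ Δ, ∀ τ ⊆ σ, τ ∈ Δ) :
    ↥(SD Δ) ≃ₕ ↥(geomReal Δ) :=
  ⟨HC Δ, QC Δ hdown, ⟨htpy3 Δ hdown⟩, ⟨htpy4 Δ hdown⟩⟩

end OMPR

/-- Topological corollary: for every finite abstract simplicial complex `Δ` there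
are `m ∈ ℕ` and a closed convex polyhedron `P ⊆ ℝ^m_{≥0}` (an intersection of
finitely many closed half-spaces with the nonnegative orthant) such that
`ℝ^m_{≥0} \ P` is homotopy equivalent to the geometric realization of `Δ`. -/
theorem orthant_minus_polyhedron_realizes {n : ℕ} (Δ : Set (Finset (Fin n)))
    (hdown : ∀ σ ∈ Δ, ∀ τ ⊆ σ, τ ∈ Δ) :
    ∃ (m : ℕ) (P : Set (Fin m → ℝ)),
      (∃ (k : ℕ) (w : Fin k → Fin m → ℝ) (b : Fin k → ℝ),
        P = {y | (∀ a, 0 ≤ y a) ∧ ∀ l, ∑ a, w l a * y a ≤ b l}) ∧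
      Nonempty ((↥({y : Fin m → ℝ | ∀ a, 0 ≤ y a} \ P)) ≃ₕ ↥(geomReal Δ)) := by
  refine ⟨OMPR.M n,
    {y | (∀ a, 0 ≤ y a) ∧ ∀ l, ∑ a, OMPR.w Δ l a * y a ≤ (fun _ => (0:ℝ)) l},
    ⟨OMPR.M n, OMPR.w Δ, fun _ => 0, rfl⟩, ?_⟩
  have hU : {y : Fin (OMPR.M n) → ℝ | ∀ a, 0 ≤ y a} \
      {y | (∀ a, 0 ≤ y a) ∧ ∀ l, ∑ a, OMPR.w Δ l a * y a ≤ (fun _ => (0:ℝ)) l}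
      = OMPR.USet Δ := by
    ext y
    simp only [Set.mem_diff, Set.mem_setOf_eq, OMPR.USet, OMPR.dot]
    constructor
    · rintro ⟨h0, h1⟩
      refine ⟨h0, ?_⟩
      by_contra hc
      push_neg at hc
      exact h1 ⟨h0, fun l => by simpa using hc l⟩
    · rintro ⟨h0, a, ha⟩
      exact ⟨h0, fun hP => absurd (hP.2 a) (not_le.mpr ha)⟩
  rw [hU]
  exact ⟨(OMPR.equiv1 Δ).trans (OMPR.equiv2 Δ hdown)⟩
end

section
/- In the Grünbaum construction, distinct maximal faces of Δ give distinct vertices and the nerve recovers Δ on maximal faces: with Δ ⊆ 2^[n] having maximal faces α_1,...,α_k, and β_i = {α_j : i ∈ α_j} ∪ ({i} if i ∉ I(Δ)) for i ∈ [n], one has for every nonempty σ ⊆ [n]: ⋂_{i∈σ} β_i ≠ ∅ if and only if σ ∈ Δ. -/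
/-- Membership in Grünbaum's face `β_i ⊆ max(Δ) ⊔ [n]`: `β_i` contains the maximal
face `α_j` (encoded `Sum.inl j`) iff `i ∈ α_j`, and contains the original vertex
`v` (encoded `Sum.inr v`) iff `v = i` and `v` is not expressible as an
intersection of maximal faces (i.e. `v ∉ I(Δ)`). -/
def grunbaumMem {n k : ℕ} (α : Fin k → Finset (Fin n)) (i : Fin n) :
    Fin k ⊕ Fin n → Prop
  | Sum.inl j => i ∈ α j
  | Sum.inr v => v = i ∧
      ¬ ∃ σ : Finset (Fin k), {a : Fin n | ∀ l ∈ σ, a ∈ α l} = {v}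

/-- In Grünbaum's construction, the nerve of the faces `β_i` recovers `Δ`:
for every nonempty `σ ⊆ [n]`, `⋂_{i∈σ} β_i ≠ ∅` iff `σ ∈ Δ`. -/
theorem grunbaum_nerve_eq {n k : ℕ} (Δ : Set (Finset (Fin n)))
    (hdown : ∀ σ ∈ Δ, ∀ τ ⊆ σ, τ ∈ Δ) (hvert : ∀ v : Fin n, {v} ∈ Δ)
    (α : Fin k → Finset (Fin n))
    (hmaxfaces : ∀ j, α j ∈ Δ ∧ ∀ τ ∈ Δ, α j ⊆ τ → τ = α j)
    (hcover : ∀ τ ∈ Δ, ∃ j, τ ⊆ α j) :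
    ∀ σ : Finset (Fin n), σ.Nonempty →
      ((∃ x : Fin k ⊕ Fin n, ∀ i ∈ σ, grunbaumMem α i x) ↔ σ ∈ Δ) := by
  intro σ hσ
  constructor
  · rintro ⟨x, hx⟩
    cases x with
    | inl j =>
        exact hdown (α j) (hmaxfaces j).1 σ (fun i hi => hx i hi)
    | inr v =>
        have hσv : σ = {v} := by
          apply Finset.eq_singleton_iff_nonempty_unique_mem.mpr
          exact ⟨hσ, fun i hi => ((hx i hi).1).symm⟩
        rw [hσv]; exact hvert v
  · intro hσΔ
    obtain ⟨j, hj⟩ := hcover σ hσΔ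
    exact ⟨Sum.inl j, fun i hi => hj hi⟩
end
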